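/- Let Ω = {ω_1 > ω_2 > ⋯ > ω_C} be positive reals, x > 0, and let (Δ(t))_{t=1}^T be a sequence with values in Ω ∪ {0}, and (σ(t))_{t=1}^T ∈ {0,1}^T with counter C(t) = #{τ < t : σ(τ) = 1}. Then ∑_{i=1}^{C̃} ω_i · #{t ≤ T : Δ(t) = ω_i, σ(t) = 1, C(t) ≤ x/ω_i²} ≤ ω_1 + x/ω_1 + ∑_{i=2}^{C̃} ω_i·(x/ω_i² − x/ω_{i−1}²), where C̃ ≤ C is any index. -/

import Mathlib

private lemma counter_strict {σ : ℕ → Bool} {t t' : ℕ} (ht : 1 ≤ t) (htt : t < t')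
    (hσ : σ t = true) :
    ((Finset.Ico 1 t).filter (fun τ => σ τ = true)).card <
      ((Finset.Ico 1 t').filter (fun τ => σ τ = true)).card := by
  have hnot : t ∉ (Finset.Ico 1 t).filter (fun τ => σ τ = true) := by
    simp [Finset.mem_Ico]
  have hsub : insert t ((Finset.Ico 1 t).filter (fun τ => σ τ = true)) ⊆
      (Finset.Ico 1 t').filter (fun τ => σ τ = true) := by
    intro s hs
    rcases Finset.mem_insert.mp hs with rfl | hs
    · simp [Finset.mem_Ico, ht, htt, hσ]
    · simp only [Finset.mem_filter, Finset.mem_Ico] at hs ⊢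
      exact ⟨⟨hs.1.1, hs.1.2.trans htt⟩, hs.2⟩
  calc ((Finset.Ico 1 t).filter (fun τ => σ τ = true)).card
      < (insert t ((Finset.Ico 1 t).filter (fun τ => σ τ = true))).card := by
        rw [Finset.card_insert_of_notMem hnot]; omega
    _ ≤ _ := Finset.card_le_card hsub

private lemma omega_anti {C : ℕ} {ω : ℕ → ℝ}
    (hdec : ∀ i ∈ Finset.Icc 2 C, ω i < ω (i - 1)) :
    ∀ i j, 1 ≤ i → i < j → j ≤ C → ω j < ω i := by
  intro i j hi hij hjC
  induction j with
  | zero => omega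
  | succ j ih =>
    have hstep : ω (j + 1) < ω j := by
      have := hdec (j + 1) (by simp only [Finset.mem_Icc]; omega)
      simpa using this
    rcases Nat.lt_or_ge i j with h | h
    · exact hstep.trans (ih h (by omega))
    · have : i = j := by omega
      subst this; exact hstep

private lemma prefix_bound {C k T : ℕ} {ω : ℕ → ℝ} {x : ℝ} (hx : 0 < x)
    (hpos : ∀ i ∈ Finset.Icc 1 C, 0 < ω i)
    (hdec : ∀ i ∈ Finset.Icc 2 C, ω i < ω (i - 1))
    (Δ : ℕ → ℝ) (σ : ℕ → Bool) (hk1 : 1 ≤ k) (hkC : k ≤ C) :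
    (∑ i ∈ Finset.Icc 1 k, (((Finset.Icc 1 T).filter (fun t =>
        Δ t = ω i ∧ σ t = true ∧
        ((((Finset.Ico 1 t).filter (fun τ => σ τ = true)).card : ℝ) ≤ x / (ω i) ^ 2))).card : ℝ))
      ≤ x / (ω k) ^ 2 + 1 := by
  classical
  set c : ℕ → ℕ := fun t => ((Finset.Ico 1 t).filter (fun τ => σ τ = true)).card with hc
  set S : ℕ → Finset ℕ := fun i => (Finset.Icc 1 T).filter (fun t =>
        Δ t = ω i ∧ σ t = true ∧ ((c t : ℝ) ≤ x / (ω i) ^ 2)) with hS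
  have hωk : 0 < ω k := hpos k (by simp only [Finset.mem_Icc]; omega)
  have hbound : ∀ i ∈ Finset.Icc 1 k, x / ω i ^ 2 ≤ x / ω k ^ 2 := by
    intro i hi
    simp only [Finset.mem_Icc] at hi
    have hωi : 0 < ω i := hpos i (by simp only [Finset.mem_Icc]; omega)
    have hle : ω k ≤ ω i := by
      rcases eq_or_lt_of_le hi.2 with h | h
      · exact le_of_eq (by rw [h])
      · exact (omega_anti hdec i k hi.1 h hkC).le
    have hsq : ω k ^ 2 ≤ ω i ^ 2 := by nlinarith
    exact div_le_div_of_nonneg_left hx.le (by positivity) hsq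
  set V : Finset ℕ := (Finset.Icc 1 T).filter
      (fun t => σ t = true ∧ ((c t : ℝ) ≤ x / (ω k) ^ 2)) with hV
  have hsub : ∀ i ∈ Finset.Icc 1 k, S i ⊆ V := by
    intro i hi t ht
    simp only [hS, hV, Finset.mem_filter] at ht ⊢
    exact ⟨ht.1, ht.2.2.1, le_trans ht.2.2.2 (hbound i hi)⟩
  have hdisj : ∀ i ∈ Finset.Icc 1 k, ∀ j ∈ Finset.Icc 1 k, i ≠ j → Disjoint (S i) (S j) := by
    intro i hi j hj hij
    simp only [Finset.mem_Icc] at hi hj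
    rw [Finset.disjoint_left]
    intro t hti htj
    simp only [hS, Finset.mem_filter] at hti htj
    have hωij : ω i = ω j := by rw [← hti.2.1, htj.2.1]
    rcases Nat.lt_or_ge i j with h | h
    · have := omega_anti hdec i j hi.1 h (le_trans hj.2 hkC)
      linarith
    · have hji : j < i := by omega
      have := omega_anti hdec j i hj.1 hji (le_trans hi.2 hkC)
      linarith
  have hcard : ∑ i ∈ Finset.Icc 1 k, (S i).card = ((Finset.Icc 1 k).biUnion S).card :=
    (Finset.card_biUnion hdisj).symm
  have h1 : ((Finset.Icc 1 k).biUnion S).card ≤ V.card :=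
    Finset.card_le_card (Finset.biUnion_subset.2 hsub)
  have h2 : V.card ≤ ⌊x / ω k ^ 2⌋₊ + 1 := by
    have hmap : ∀ t ∈ V, c t ∈ Finset.range (⌊x / ω k ^ 2⌋₊ + 1) := by
      intro t ht
      simp only [hV, Finset.mem_filter] at ht
      simp only [Finset.mem_range, Nat.lt_succ_iff]
      exact Nat.le_floor ht.2.2
    have hinj : ∀ t ∈ V, ∀ t' ∈ V, c t = c t' → t = t' := by
      intro t ht t' ht' hct
      simp only [hV, Finset.mem_filter, Finset.mem_Icc] at ht ht'
      rcases lt_trichotomy t t' with h | h | h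
      · exact absurd hct (Nat.ne_of_lt (counter_strict ht.1.1 h ht.2.1))
      · exact h
      · exact absurd hct.symm (Nat.ne_of_lt (counter_strict ht'.1.1 h ht'.2.1))
    calc V.card ≤ (Finset.range (⌊x / ω k ^ 2⌋₊ + 1)).card :=
          Finset.card_le_card_of_injOn c hmap hinj
      _ = ⌊x / ω k ^ 2⌋₊ + 1 := Finset.card_range _
  have hfloor : (⌊x / ω k ^ 2⌋₊ : ℝ) ≤ x / ω k ^ 2 := Nat.floor_le (by positivity)
  have : ∑ i ∈ Finset.Icc 1 k, ((S i).card : ℝ) ≤ ((⌊x / ω k ^ 2⌋₊ + 1 : ℕ) : ℝ) := by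
    rw [← Nat.cast_sum]
    exact_mod_cast (hcard ▸ le_trans h1 h2 : ∑ i ∈ Finset.Icc 1 k, (S i).card ≤ _)
  push_cast at this
  calc _ ≤ ((⌊x / ω k ^ 2⌋₊ : ℝ) + 1) := this
    _ ≤ x / ω k ^ 2 + 1 := by linarith

theorem stmt_16 (C Ctil T : ℕ) (hC1 : 1 ≤ Ctil) (hCtil : Ctil ≤ C)
    (ω : ℕ → ℝ) (x : ℝ) (hx : 0 < x)
    (hpos : ∀ i ∈ Finset.Icc 1 C, 0 < ω i)
    (hdec : ∀ i ∈ Finset.Icc 2 C, ω i < ω (i - 1))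
    (Δ : ℕ → ℝ) (σ : ℕ → Bool) :
    ∑ i ∈ Finset.Icc 1 Ctil, ω i *
      (((Finset.Icc 1 T).filter (fun t =>
        Δ t = ω i ∧ σ t = true ∧
        ((((Finset.Ico 1 t).filter (fun τ => σ τ = true)).card : ℝ) ≤ x / (ω i) ^ 2))).card : ℝ)
      ≤ ω 1 + x / ω 1 + ∑ i ∈ Finset.Icc 2 Ctil, ω i * (x / (ω i) ^ 2 - x / (ω (i - 1)) ^ 2) := by
  classical
  set N : ℕ → ℝ := fun i => (((Finset.Icc 1 T).filter (fun t =>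
        Δ t = ω i ∧ σ t = true ∧
        ((((Finset.Ico 1 t).filter (fun τ => σ τ = true)).card : ℝ) ≤ x / (ω i) ^ 2))).card : ℝ)
    with hNdef
  have hpb : ∀ k, 1 ≤ k → k ≤ C → ∑ i ∈ Finset.Icc 1 k, N i ≤ x / ω k ^ 2 + 1 := by
    intro k hk1 hkC
    exact prefix_bound hx hpos hdec Δ σ hk1 hkC
  have key : ∀ k, 1 ≤ k → k ≤ C →
      ∑ i ∈ Finset.Icc 1 k, ω i * N i
        + ω k * (x / ω k ^ 2 + 1 - ∑ i ∈ Finset.Icc 1 k, N i)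
      ≤ ω 1 + x / ω 1 + ∑ i ∈ Finset.Icc 2 k, ω i * (x / ω i ^ 2 - x / ω (i - 1) ^ 2) := by
    intro k hk
    induction k, hk using Nat.le_induction with
    | base =>
      intro h1C
      have hω1 : 0 < ω 1 := hpos 1 (by simp only [Finset.mem_Icc]; omega)
      rw [Finset.Icc_self, Finset.sum_singleton, Finset.sum_singleton,
        Finset.Icc_eq_empty (by omega : ¬ (2:ℕ) ≤ 1), Finset.sum_empty]
      have heq : ω 1 * N 1 + ω 1 * (x / ω 1 ^ 2 + 1 - N 1) = ω 1 + x / ω 1 + 0 := by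
        field_simp; ring
      linarith [heq]
    | succ k hk ih =>
      intro hk1C
      have hkC : k ≤ C := by omega
      have IH := ih hkC
      have hPk := hpb k hk hkC
      have hba : ω (k + 1) < ω k := by
        have := hdec (k + 1) (by simp only [Finset.mem_Icc]; omega)
        simpa using this
      rw [Finset.sum_Icc_succ_top (by omega : 1 ≤ k + 1),
          Finset.sum_Icc_succ_top (by omega : 1 ≤ k + 1),
          Finset.sum_Icc_succ_top (by omega : 2 ≤ k + 1)]
      simp only [Nat.add_sub_cancel]
      have hprod : 0 ≤ (ω k - ω (k + 1)) * (x / ω k ^ 2 + 1 - ∑ i ∈ Finset.Icc 1 k, N i) :=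
        mul_nonneg (by linarith) (by linarith)
      nlinarith [hprod, IH]
  have hfin := key Ctil hC1 hCtil
  have hpbC := hpb Ctil hC1 hCtil
  have hωC : 0 < ω Ctil := hpos Ctil (by simp only [Finset.mem_Icc]; omega)
  have hnn : 0 ≤ ω Ctil * (x / ω Ctil ^ 2 + 1 - ∑ i ∈ Finset.Icc 1 Ctil, N i) :=
    mul_nonneg hωC.le (by linarith)
  linarith
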